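/- Given a sequence (ν_k) of finitely supported signed measures on a set K with ‖ν_k‖ ≤ 1, a sequence of pairwise disjoint sets (W_k) with |ν_k(W_k)| > ε and |ν_k|(W_n) = 0 for k < n, there exist a strictly increasing sequence of indices (i_k) such that, setting λ_k = ν_{i_k} and V_k = W_{i_k}, one has |λ_k(V_k)| > ε, |λ_k|(V_l) = 0 for k < l, and |λ_l|(V_k) ≤ ε/3^k for all k < l. -/

import Mathlib

open Filter Topology Classical

/-- The value `ν(A) = ∑_{x ∈ A} ν({x})` of a finitely supported sign-measure `ν` on a set `A`. -/
noncomputable def svMeas {K : Type*} (ν : K →₀ ℝ) (A : Set K) : ℝ :=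
  ∑ x ∈ ν.support, if x ∈ A then ν x else 0

/-- The total variation `|ν|(A)` of a finitely supported sign-measure `ν` on a set `A`. -/
noncomputable def tvMeas {K : Type*} (ν : K →₀ ℝ) (A : Set K) : ℝ :=
  ∑ x ∈ ν.support, if x ∈ A then |ν x| else 0

/-- Given finitely supported sign-measures `ν_k` on `K` with `‖ν_k‖ ≤ 1` and pairwise
disjoint sets `W_k` with `|ν_k(W_k)| > ε` and `|ν_k|(W_n) = 0` for `k < n`, there is a
strictly increasing sequence of indices `i_k` such that `λ_k = ν_{i_k}`, `V_k = W_{i_k}`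
satisfy `|λ_k(V_k)| > ε`, `|λ_k|(V_l) = 0` for `k < l`, and `|λ_l|(V_k) ≤ ε/3^k` for `k < l`. -/
theorem stmt_14 (K : Type*) (ε : ℝ) (hε : 0 < ε)
    (ν : ℕ → (K →₀ ℝ)) (W : ℕ → Set K)
    (hdisj : Pairwise (Function.onFun Disjoint W))
    (hnorm : ∀ k, tvMeas (ν k) Set.univ ≤ 1)
    (hbig : ∀ k, ε < |svMeas (ν k) (W k)|)
    (hzero : ∀ k n, k < n → tvMeas (ν k) (W n) = 0) :
    ∃ i : ℕ → ℕ, StrictMono i ∧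
      (∀ k, ε < |svMeas (ν (i k)) (W (i k))|) ∧
      (∀ k l, k < l → tvMeas (ν (i k)) (W (i l)) = 0) ∧
      (∀ k l, k < l → tvMeas (ν (i l)) (W (i k)) ≤ ε / 3 ^ k) := by
  classical
  -- Disjointness implies the sum of total variations over any finite family is ≤ 1.
  have hsum : ∀ n (F : Finset ℕ), ∑ m ∈ F, tvMeas (ν n) (W m) ≤ 1 := by
    intro n F
    have h1 : ∑ m ∈ F, tvMeas (ν n) (W m)
        = ∑ x ∈ (ν n).support, ∑ m ∈ F, (if x ∈ W m then |ν n x| else 0) := by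
      rw [Finset.sum_comm]; rfl
    rw [h1]
    have h2 : ∑ x ∈ (ν n).support, (∑ m ∈ F, (if x ∈ W m then |ν n x| else 0))
        ≤ ∑ x ∈ (ν n).support, |ν n x| := by
      apply Finset.sum_le_sum
      intro x _
      by_cases hx : ∃ m ∈ F, x ∈ W m
      · obtain ⟨m0, hm0F, hm0⟩ := hx
        rw [Finset.sum_eq_single m0]
        · simp [hm0]
        · intro m hmF hne
          have hxm : x ∉ W m := fun hxm =>
            Set.disjoint_left.mp (hdisj hne) hxm hm0
          simp [hxm]
        · intro h; exact absurd hm0F h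
      · push_neg at hx
        rw [Finset.sum_eq_zero]
        · positivity
        · intro m hm; simp [hx m hm]
    refine h2.trans ?_
    have := hnorm n
    simpa [tvMeas] using this
  -- Pigeonhole: from any infinite set of indices one can pick `m` such that
  -- infinitely many later measures have small total variation on `W m`.
  have key : ∀ (S : Set ℕ) (k : ℕ), S.Infinite →
      ∃ m, m ∈ S ∧ {n ∈ S | m < n ∧ tvMeas (ν n) (W m) ≤ ε / 3 ^ k}.Infinite := by
    intro S k hS
    set δ := ε / 3 ^ k with hδdef
    have hδ : 0 < δ := by positivity
    obtain ⟨N, hN⟩ := exists_nat_gt (1 / δ)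
    obtain ⟨F, hFS, hFcard⟩ := hS.exists_subset_card_eq (N + 1)
    have hFne : F.Nonempty := by rw [← Finset.card_pos, hFcard]; omega
    have hstep : ∀ n, ∃ m ∈ F, tvMeas (ν n) (W m) ≤ δ := by
      intro n
      by_contra hcon
      push_neg at hcon
      have hge : (N + 1 : ℝ) * δ ≤ ∑ m ∈ F, tvMeas (ν n) (W m) := by
        calc (N + 1 : ℝ) * δ = ∑ _m ∈ F, δ := by
              rw [Finset.sum_const, hFcard]; push_cast; ring
          _ ≤ _ := Finset.sum_le_sum (fun m hm => (hcon m hm).le)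
      have h1 : (1 : ℝ) < (N + 1 : ℝ) * δ := by
        have h2 : 1 / δ < (N : ℝ) + 1 := by linarith
        calc (1 : ℝ) = (1 / δ) * δ := by field_simp
          _ < ((N : ℝ) + 1) * δ := mul_lt_mul_of_pos_right h2 hδ
      linarith [hsum n F]
    by_contra hcon
    push_neg at hcon
    have hfin : ∀ m ∈ F, {n ∈ S | tvMeas (ν n) (W m) ≤ δ}.Finite := by
      intro m hm
      have h1 := hcon m (hFS hm)
      have hsub : {n ∈ S | tvMeas (ν n) (W m) ≤ δ}
          ⊆ {n ∈ S | m < n ∧ tvMeas (ν n) (W m) ≤ δ} ∪ Set.Iic m := by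
        rintro n ⟨hnS, hn⟩
        rcases lt_or_ge m n with h | h
        · exact Or.inl ⟨hnS, h, hn⟩
        · exact Or.inr h
      exact (h1.union (Set.finite_Iic m)).subset hsub
    have hcover : S ⊆ ⋃ m ∈ F, {n ∈ S | tvMeas (ν n) (W m) ≤ δ} := by
      intro n hn
      obtain ⟨m, hm, h⟩ := hstep n
      exact Set.mem_biUnion hm ⟨hn, h⟩
    exact hS ((Set.Finite.biUnion F.finite_toSet hfin).subset hcover)
  choose! f hf using key
  set g : ℕ → Set ℕ := fun k =>
    Nat.rec Set.univ
      (fun k S => {n ∈ S | f S k < n ∧ tvMeas (ν n) (W (f S k)) ≤ ε / 3 ^ k}) k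
    with hg
  have hgs : ∀ k, g (k + 1)
      = {n ∈ g k | f (g k) k < n ∧ tvMeas (ν n) (W (f (g k) k)) ≤ ε / 3 ^ k} :=
    fun k => rfl
  have hginf : ∀ k, (g k).Infinite := by
    intro k
    induction k with
    | zero => exact Set.infinite_univ
    | succ k ih => exact (hf (g k) k ih).2
  set i : ℕ → ℕ := fun k => f (g k) k with hi
  have hmem : ∀ k, i k ∈ g k := fun k => (hf (g k) k (hginf k)).1
  have hsucc : ∀ k, ∀ n ∈ g (k + 1), i k < n ∧ tvMeas (ν n) (W (i k)) ≤ ε / 3 ^ k := by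
    intro k n hn
    exact hn.2
  have hmono : ∀ k l, k ≤ l → g l ⊆ g k := by
    intro k l h
    induction l, h using Nat.le_induction with
    | base => exact subset_rfl
    | succ l hl ih => exact fun n hn => ih hn.1
  have hsm : StrictMono i :=
    strictMono_nat_of_lt_succ (fun k => (hsucc k _ (hmem (k + 1))).1)
  refine ⟨i, hsm, fun k => hbig (i k), fun k l hkl => hzero _ _ (hsm hkl), fun k l hkl => ?_⟩
  have hil : i l ∈ g (k + 1) := hmono (k + 1) l hkl (hmem l)
  exact (hsucc k _ hil).2
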